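/- Let X be a Poisson random variable with mean α/m. Then for every n≥0, E[(mX+1)_{n,λ}] = Σ_{k=0}^n C(n,k) (1)_{n-k,λ} m^k φ_{k,λ/m}(α/m) = Σ_{j=0}^n α^j Σ_{k=j}^n C(n,k) (1)_{n-k,λ} m^{k-j} S_{2,λ/m}(k,j). -/

import Mathlib

open Finset

/-- Degenerate falling factorial `(x)_{n,λ} = x(x-λ)⋯(x-(n-1)λ)`. -/
noncomputable def dfall (lam x : ℝ) (n : ℕ) : ℝ := ∏ i ∈ Finset.range n, (x - i * lam)

/-- Ordinary falling factorial `(x)_n = x(x-1)⋯(x-n+1)`. -/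
noncomputable def ffall (x : ℝ) (n : ℕ) : ℝ := ∏ i ∈ Finset.range n, (x - i)

lemma dfall_zero (lam x : ℝ) : dfall lam x 0 = 1 := by simp [dfall]

lemma dfall_succ (lam x : ℝ) (n : ℕ) :
    dfall lam x (n + 1) = dfall lam x n * (x - n * lam) := by
  simp [dfall, Finset.prod_range_succ]

/-- Vandermonde identity for degenerate falling factorials. -/
lemma dfall_add (lam : ℝ) : ∀ (n : ℕ) (x y : ℝ),
    dfall lam (x + y) n
      = ∑ k ∈ Finset.range (n + 1),
          (n.choose k : ℝ) * (dfall lam x k * dfall lam y (n - k)) := by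
  intro n
  induction n with
  | zero => intro x y; simp [dfall]
  | succ n ih =>
      intro x y
      have hstep : dfall lam (x + y) (n + 1)
          = ∑ k ∈ Finset.range (n + 1),
              (n.choose k : ℝ) * (dfall lam x k * dfall lam y (n - k)) * (x + y - n * lam) := by
        rw [dfall_succ, ih, Finset.sum_mul]
      have hsplit : ∀ k ∈ Finset.range (n + 1),
          (n.choose k : ℝ) * (dfall lam x k * dfall lam y (n - k)) * (x + y - n * lam)
            = (n.choose k : ℝ) * (dfall lam x (k + 1) * dfall lam y (n - k))
              + (n.choose k : ℝ) * (dfall lam x k * dfall lam y (n + 1 - k)) := by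
        intro k hk
        have hkn : k ≤ n := Nat.lt_succ_iff.mp (Finset.mem_range.mp hk)
        have hcast : ((n - k : ℕ) : ℝ) = (n : ℝ) - (k : ℝ) := by
          push_cast [Nat.cast_sub hkn]; ring
        have h2 : n + 1 - k = (n - k) + 1 := by omega
        rw [dfall_succ, h2, dfall_succ, hcast]
        ring
      rw [hstep, Finset.sum_congr rfl hsplit, Finset.sum_add_distrib]
      -- Now compare with target via Pascal's rule
      have htarget : ∑ k ∈ Finset.range (n + 2),
            ((n + 1).choose k : ℝ) * (dfall lam x k * dfall lam y (n + 1 - k))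
          = (∑ k ∈ Finset.range (n + 1),
              ((n + 1).choose (k + 1) : ℝ) * (dfall lam x (k + 1) * dfall lam y (n - k)))
            + dfall lam y (n + 1) := by
        rw [Finset.sum_range_succ']
        simp [dfall_zero]
      have hpascal : ∀ k ∈ Finset.range (n + 1),
          ((n + 1).choose (k + 1) : ℝ) * (dfall lam x (k + 1) * dfall lam y (n - k))
            = (n.choose k : ℝ) * (dfall lam x (k + 1) * dfall lam y (n - k))
              + (n.choose (k + 1) : ℝ) * (dfall lam x (k + 1) * dfall lam y (n - k)) := by
        intro k hk
        rw [Nat.choose_succ_succ]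
        push_cast
        ring
      have hB : ∑ k ∈ Finset.range (n + 1),
            (n.choose k : ℝ) * (dfall lam x k * dfall lam y (n + 1 - k))
          = (∑ k ∈ Finset.range (n + 1),
              (n.choose (k + 1) : ℝ) * (dfall lam x (k + 1) * dfall lam y (n - k)))
            + dfall lam y (n + 1) := by
        rw [Finset.sum_range_succ']
        have h1 : ∀ k ∈ Finset.range n,
            (n.choose (k + 1) : ℝ) * (dfall lam x (k + 1) * dfall lam y (n + 1 - (k + 1)))
              = (n.choose (k + 1) : ℝ) * (dfall lam x (k + 1) * dfall lam y (n - k)) := by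
          intro k hk
          have h12 : n + 1 - (k + 1) = n - k := by omega
          rw [h12]
        rw [Finset.sum_congr rfl h1]
        have h2 : ∑ k ∈ Finset.range (n + 1),
            (n.choose (k + 1) : ℝ) * (dfall lam x (k + 1) * dfall lam y (n - k))
            = ∑ k ∈ Finset.range n,
            (n.choose (k + 1) : ℝ) * (dfall lam x (k + 1) * dfall lam y (n - k)) := by
          rw [Finset.sum_range_succ, Nat.choose_succ_self]
          simp
        rw [h2]
        simp [dfall_zero]
      rw [htarget, Finset.sum_congr rfl hpascal, Finset.sum_add_distrib, hB]
      ring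

/-- Scaling: `(m x)_{n,λ} = m^n (x)_{n,λ/m}`. -/
lemma dfall_scale (lam x c : ℝ) (hc : c ≠ 0) (n : ℕ) :
    dfall lam (c * x) n = c ^ n * dfall (lam / c) x n := by
  unfold dfall
  calc ∏ i ∈ Finset.range n, (c * x - i * lam)
      = ∏ i ∈ Finset.range n, (c * (x - i * (lam / c))) := by
        refine Finset.prod_congr rfl fun i _ => ?_
        field_simp
    _ = c ^ n * ∏ i ∈ Finset.range n, (x - i * (lam / c)) := by
        rw [Finset.prod_mul_distrib, Finset.prod_const, Finset.card_range]

lemma ffall_nat_cast (k i : ℕ) : ffall (k : ℝ) i = (k.descFactorial i : ℝ) := by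
  by_cases h : i ≤ k
  · rw [Nat.descFactorial_eq_prod_range, Nat.cast_prod, ffall]
    refine Finset.prod_congr rfl fun r hr => ?_
    have hrk : r ≤ k := le_trans (le_of_lt (Finset.mem_range.mp hr)) h
    push_cast [Nat.cast_sub hrk]
    ring
  · push_neg at h
    rw [Nat.descFactorial_eq_zero_iff_lt.mpr h, Nat.cast_zero, ffall]
    exact Finset.prod_eq_zero (Finset.mem_range.mpr h) (by simp)

lemma g_summable (t : ℝ) (i : ℕ) :
    Summable (fun k : ℕ => ffall (k : ℝ) i * t ^ k / (Nat.factorial k)) := by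
  rw [← summable_nat_add_iff i]
  have heq : ∀ j : ℕ,
      ffall ((j + i : ℕ) : ℝ) i * t ^ (j + i) / (Nat.factorial (j + i))
        = t ^ i * (t ^ j / (Nat.factorial j)) := by
    intro j
    rw [ffall_nat_cast]
    have hfac : ((Nat.factorial (j + i)) : ℝ)
        = ((Nat.factorial j) : ℝ) * ((j + i).descFactorial i : ℝ) := by
      have := Nat.factorial_mul_descFactorial (Nat.le_add_left i j)
      have h2 : j + i - i = j := by omega
      rw [h2] at this
      exact_mod_cast this.symm
    have hd : ((j + i).descFactorial i : ℝ) ≠ 0 := by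
      have : ¬ (j + i < i) := by omega
      exact_mod_cast fun hc => this (Nat.descFactorial_eq_zero_iff_lt.mp (by exact_mod_cast hc))
    have hj : ((Nat.factorial j) : ℝ) ≠ 0 := by
      exact_mod_cast Nat.factorial_ne_zero j
    rw [hfac, pow_add]
    field_simp
  simp only [heq]
  exact (Real.summable_pow_div_factorial t).mul_left _

lemma g_tsum (t : ℝ) (i : ℕ) :
    ∑' k : ℕ, ffall (k : ℝ) i * t ^ k / (Nat.factorial k) = t ^ i * Real.exp t := by
  have hsum := g_summable t i
  rw [← hsum.sum_add_tsum_nat_add i]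
  have hzero : ∑ k ∈ Finset.range i, ffall (k : ℝ) i * t ^ k / (Nat.factorial k) = 0 := by
    refine Finset.sum_eq_zero fun k hk => ?_
    have hki : k < i := Finset.mem_range.mp hk
    rw [ffall_nat_cast, Nat.descFactorial_eq_zero_iff_lt.mpr hki]
    simp
  have heq : ∀ j : ℕ,
      ffall ((j + i : ℕ) : ℝ) i * t ^ (j + i) / (Nat.factorial (j + i))
        = t ^ i * (t ^ j / (Nat.factorial j)) := by
    intro j
    rw [ffall_nat_cast]
    have hfac : ((Nat.factorial (j + i)) : ℝ)
        = ((Nat.factorial j) : ℝ) * ((j + i).descFactorial i : ℝ) := by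
      have := Nat.factorial_mul_descFactorial (Nat.le_add_left i j)
      have h2 : j + i - i = j := by omega
      rw [h2] at this
      exact_mod_cast this.symm
    have hd : ((j + i).descFactorial i : ℝ) ≠ 0 := by
      have : ¬ (j + i < i) := by omega
      exact_mod_cast fun hc => this (Nat.descFactorial_eq_zero_iff_lt.mp (by exact_mod_cast hc))
    have hj : ((Nat.factorial j) : ℝ) ≠ 0 := by
      exact_mod_cast Nat.factorial_ne_zero j
    rw [hfac, pow_add]
    field_simp
  have hexp : ∑' j : ℕ, t ^ j / (Nat.factorial j) = Real.exp t := by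
    rw [Real.exp_eq_exp_ℝ, NormedSpace.exp_eq_tsum_div]
  calc (∑ k ∈ Finset.range i, ffall (k : ℝ) i * t ^ k / (Nat.factorial k))
        + ∑' j : ℕ, ffall ((j + i : ℕ) : ℝ) i * t ^ (j + i) / (Nat.factorial (j + i))
      = ∑' j : ℕ, t ^ i * (t ^ j / (Nat.factorial j)) := by
        rw [hzero, zero_add]
        exact tsum_congr heq
    _ = t ^ i * Real.exp t := by rw [tsum_mul_left, hexp]

theorem stmt3 (m : ℕ) (hm : 0 < m) (α lam : ℝ) (hα : 0 < α) (hlam : lam ≠ 0)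
    (S : ℕ → ℕ → ℝ)
    (hS : ∀ (x : ℝ) (N : ℕ),
      dfall (lam / m) x N = ∑ k ∈ Finset.range (N + 1), S N k * ffall x k)
    (n : ℕ) :
    (Real.exp (-(α / m)) *
        ∑' k : ℕ, dfall lam ((m : ℝ) * k + 1) n * (α / m) ^ k / (Nat.factorial k)
      = ∑ k ∈ Finset.range (n + 1), (n.choose k : ℝ) * dfall lam 1 (n - k) * (m : ℝ) ^ k *
          (∑ j ∈ Finset.range (k + 1), S k j * (α / m) ^ j)) ∧
    (Real.exp (-(α / m)) *
        ∑' k : ℕ, dfall lam ((m : ℝ) * k + 1) n * (α / m) ^ k / (Nat.factorial k)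
      = ∑ j ∈ Finset.range (n + 1), α ^ j *
          ∑ k ∈ Finset.Icc j n, (n.choose k : ℝ) * dfall lam 1 (n - k) * (m : ℝ) ^ (k - j) * S k j) := by
  have hm0 : (m : ℝ) ≠ 0 := Nat.cast_ne_zero.mpr hm.ne'
  set t : ℝ := α / m with ht
  -- coefficients
  set c : ℕ → ℕ → ℝ := fun j i => (n.choose j : ℝ) * dfall lam 1 (n - j) * (m : ℝ) ^ j * S j i
    with hc
  -- expansion of the summand
  have hexpand : ∀ k : ℕ,
      dfall lam ((m : ℝ) * k + 1) n * t ^ k / (Nat.factorial k)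
        = ∑ j ∈ Finset.range (n + 1), ∑ i ∈ Finset.range (j + 1),
            c j i * (ffall (k : ℝ) i * t ^ k / (Nat.factorial k)) := by
    intro k
    have h1 : dfall lam ((m : ℝ) * k + 1) n
        = ∑ j ∈ Finset.range (n + 1), ∑ i ∈ Finset.range (j + 1), c j i * ffall (k : ℝ) i := by
      rw [dfall_add lam n ((m : ℝ) * k) 1]
      refine Finset.sum_congr rfl fun j _ => ?_
      rw [dfall_scale lam (k : ℝ) (m : ℝ) hm0 j, hS (k : ℝ) j]
      simp only [hc, Finset.mul_sum, Finset.sum_mul]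
      exact Finset.sum_congr rfl fun i _ => by ring
    rw [h1, Finset.sum_mul, Finset.sum_div]
    refine Finset.sum_congr rfl fun j _ => ?_
    rw [Finset.sum_mul, Finset.sum_div]
    refine Finset.sum_congr rfl fun i _ => ?_
    ring
  -- compute the tsum
  have htsum : ∑' k : ℕ, dfall lam ((m : ℝ) * k + 1) n * t ^ k / (Nat.factorial k)
      = ∑ j ∈ Finset.range (n + 1), ∑ i ∈ Finset.range (j + 1), c j i * (t ^ i * Real.exp t) := by
    rw [tsum_congr hexpand]
    rw [Summable.tsum_finsetSum (fun j _ => summable_sum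
      (fun i _ => (g_summable t i).mul_left (c j i)))]
    refine Finset.sum_congr rfl fun j _ => ?_
    rw [Summable.tsum_finsetSum (fun i _ => (g_summable t i).mul_left (c j i))]
    refine Finset.sum_congr rfl fun i _ => ?_
    rw [tsum_mul_left, g_tsum]
  have hexp1 : Real.exp (-t) * Real.exp t = 1 := by
    rw [← Real.exp_add]; simp
  have hfirst : Real.exp (-t) *
        (∑' k : ℕ, dfall lam ((m : ℝ) * k + 1) n * t ^ k / (Nat.factorial k))
      = ∑ k ∈ Finset.range (n + 1), (n.choose k : ℝ) * dfall lam 1 (n - k) * (m : ℝ) ^ k *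
          (∑ j ∈ Finset.range (k + 1), S k j * t ^ j) := by
    rw [htsum, Finset.mul_sum]
    refine Finset.sum_congr rfl fun j _ => ?_
    rw [Finset.mul_sum, Finset.mul_sum]
    refine Finset.sum_congr rfl fun i _ => ?_
    simp only [hc]
    calc Real.exp (-t) * ((n.choose j : ℝ) * dfall lam 1 (n - j) * (m : ℝ) ^ j * S j i
          * (t ^ i * Real.exp t))
        = ((n.choose j : ℝ) * dfall lam 1 (n - j) * (m : ℝ) ^ j * (S j i * t ^ i))
            * (Real.exp (-t) * Real.exp t) := by ring
      _ = (n.choose j : ℝ) * dfall lam 1 (n - j) * (m : ℝ) ^ j * (S j i * t ^ i) := by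
          rw [hexp1, mul_one]
  constructor
  · exact hfirst
  · rw [hfirst]
    -- finite algebraic rearrangement
    have hterm : ∀ k ∈ Finset.range (n + 1),
        (n.choose k : ℝ) * dfall lam 1 (n - k) * (m : ℝ) ^ k *
            (∑ j ∈ Finset.range (k + 1), S k j * t ^ j)
          = ∑ j ∈ Finset.range (k + 1),
              α ^ j * ((n.choose k : ℝ) * dfall lam 1 (n - k) * (m : ℝ) ^ (k - j) * S k j) := by
      intro k _
      rw [Finset.mul_sum]
      refine Finset.sum_congr rfl fun j hj => ?_
      have hjk : j ≤ k := Nat.lt_succ_iff.mp (Finset.mem_range.mp hj)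
      have hpow : (m : ℝ) ^ k * t ^ j = α ^ j * (m : ℝ) ^ (k - j) := by
        rw [ht, div_pow]
        have hmk : (m : ℝ) ^ (k - j) * (m : ℝ) ^ j = (m : ℝ) ^ k := by
          rw [← pow_add]
          congr 1
          omega
        field_simp [← hmk]
        rw [← hmk]; ring
      calc (n.choose k : ℝ) * dfall lam 1 (n - k) * (m : ℝ) ^ k * (S k j * t ^ j)
          = (n.choose k : ℝ) * dfall lam 1 (n - k) * ((m : ℝ) ^ k * t ^ j) * S k j := by ring
        _ = α ^ j * ((n.choose k : ℝ) * dfall lam 1 (n - k) * (m : ℝ) ^ (k - j) * S k j) := by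
            rw [hpow]; ring
    rw [Finset.sum_congr rfl hterm]
    rw [Finset.sum_comm' (t' := Finset.range (n + 1)) (s' := fun j => Finset.Icc j n)
      (by intro k j; simp only [Finset.mem_range, Finset.mem_Icc]; omega)]
    refine Finset.sum_congr rfl fun j _ => ?_
    rw [Finset.mul_sum]
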